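/- arXiv:2209.04356 — 7 statements merged into one kernel-verified Lean document; each statement's English description precedes it below -/
import Mathlib

section
/- Let C, X, Y be finite nonempty types and let p be a probability mass function on C × X × Y. Fix x ∈ X and y ∈ Y, and assume p(X = x, C = c) > 0 for every c ∈ C. Define the feasible set S as the set of pairs of vectors (a, b) ∈ (C → ℝ) × (C → ℝ) such that for every c ∈ C: 0 ≤ a_c ≤ b_c ≤ p(C = c), 0 < b_c, a_c ≤ p(X = x, Y = y), b_c ≤ p(X = x), a_c ≥ p(X = x, Y = y) + p(C = c) − 1, b_c ≥ p(X = x) + p(C = c) − 1, and additionally Σ_c a_c = p(X = x, Y = y) and Σ_c b_c = p(X = x). Then the back-door adjusted causal effect Σ_c p(X = x, Y = y, C = c) · p(C = c) / p(X = x, C = c) lies between the infimum and the supremum over (a, b) ∈ S of the objective Σ_c a_c · p(C = c) / b_c. -/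
/-! STATEMENT 1: the back-door adjusted causal effect
`Σ_c p(x,y,c)·p(c)/p(x,c)` lies between the infimum and the supremum of the
objective `Σ_c a_c·p(c)/b_c` over the feasible set of the causal-bound
optimization problem. -/

open Finset

/-- `p(X = x, Y = y, C = c)`: probability of the singleton `(c, x, y)`. -/
def pXYC {C X Y : Type*} (p : C × X × Y → ℝ) (x : X) (y : Y) (c : C) : ℝ :=
  p (c, x, y)

/-- `p(X = x, C = c)`: marginal over `Y`. -/
noncomputable def pXC {C X Y : Type*} [Fintype Y] (p : C × X × Y → ℝ) (x : X) (c : C) : ℝ :=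
  ∑ y' : Y, p (c, x, y')

/-- `p(X = x, Y = y)`: marginal over `C`. -/
noncomputable def pXY {C X Y : Type*} [Fintype C] (p : C × X × Y → ℝ) (x : X) (y : Y) : ℝ :=
  ∑ c : C, p (c, x, y)

/-- `p(X = x)`: marginal over `C` and `Y`. -/
noncomputable def pX {C X Y : Type*} [Fintype C] [Fintype Y] (p : C × X × Y → ℝ) (x : X) : ℝ :=
  ∑ c : C, ∑ y' : Y, p (c, x, y')

/-- `p(C = c)`: marginal over `X` and `Y`. -/
noncomputable def pC {C X Y : Type*} [Fintype X] [Fintype Y] (p : C × X × Y → ℝ) (c : C) : ℝ :=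
  ∑ x' : X, ∑ y' : Y, p (c, x', y')

/-- The feasible set `S` of the causal-bound optimization problem. -/
noncomputable def feasibleSet {C X Y : Type*} [Fintype C] [Fintype X] [Fintype Y]
    (p : C × X × Y → ℝ) (x : X) (y : Y) : Set ((C → ℝ) × (C → ℝ)) :=
  {ab | (∀ c : C,
          0 ≤ ab.1 c ∧ ab.1 c ≤ ab.2 c ∧ ab.2 c ≤ pC p c ∧ 0 < ab.2 c ∧
          ab.1 c ≤ pXY p x y ∧ ab.2 c ≤ pX p x ∧
          pXY p x y + pC p c - 1 ≤ ab.1 c ∧ pX p x + pC p c - 1 ≤ ab.2 c) ∧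
        (∑ c : C, ab.1 c) = pXY p x y ∧ (∑ c : C, ab.2 c) = pX p x}

/-- The objective `Σ_c a_c · p(C = c) / b_c` of the causal-bound optimization problem. -/
noncomputable def objective {C X Y : Type*} [Fintype C] [Fintype X] [Fintype Y]
    (p : C × X × Y → ℝ) (ab : (C → ℝ) × (C → ℝ)) : ℝ :=
  ∑ c : C, ab.1 c * pC p c / ab.2 c

set_option linter.unusedSectionVars false
section aux
variable {C X Y : Type*} [Fintype C] [Fintype X] [Fintype Y]
variable (p : C × X × Y → ℝ)

lemma pC_nonneg (hp : ∀ z, 0 ≤ p z) (c : C) : 0 ≤ pC p c :=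
  Finset.sum_nonneg fun _ _ => Finset.sum_nonneg fun _ _ => hp _

lemma pXC_nonneg (hp : ∀ z, 0 ≤ p z) (x : X) (c : C) : 0 ≤ pXC p x c :=
  Finset.sum_nonneg fun _ _ => hp _

lemma pXC_le_pC (hp : ∀ z, 0 ≤ p z) (x : X) (c : C) : pXC p x c ≤ pC p c :=
  Finset.single_le_sum (f := fun x' => ∑ y' : Y, p (c, x', y'))
    (fun _ _ => Finset.sum_nonneg fun _ _ => hp _) (Finset.mem_univ x)

lemma pXYC_le_pXC (hp : ∀ z, 0 ≤ p z) (x : X) (y : Y) (c : C) :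
    pXYC p x y c ≤ pXC p x c :=
  Finset.single_le_sum (f := fun y' => p (c, x, y')) (fun _ _ => hp _) (Finset.mem_univ y)

lemma pXYC_le_pC (hp : ∀ z, 0 ≤ p z) (x : X) (y : Y) (c : C) :
    pXYC p x y c ≤ pC p c :=
  (pXYC_le_pXC p hp x y c).trans (pXC_le_pC p hp x c)

lemma sum_pC (hsum : ∑ z : C × X × Y, p z = 1) : ∑ c : C, pC p c = 1 := by
  rw [← hsum, Fintype.sum_prod_type]
  exact Finset.sum_congr rfl fun c _ => by rw [Fintype.sum_prod_type]; rfl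

end aux

theorem backdoor_between_inf_and_sup
    {C X Y : Type*} [Fintype C] [Fintype X] [Fintype Y]
    [Nonempty C] [Nonempty X] [Nonempty Y]
    (p : C × X × Y → ℝ) (hp : ∀ z, 0 ≤ p z) (hsum : ∑ z : C × X × Y, p z = 1)
    (x : X) (y : Y)
    (hpos : ∀ c : C, 0 < pXC p x c) :
    sInf (objective p '' feasibleSet p x y) ≤
        (∑ c : C, pXYC p x y c * pC p c / pXC p x c) ∧
    (∑ c : C, pXYC p x y c * pC p c / pXC p x c) ≤
        sSup (objective p '' feasibleSet p x y) := by
  classical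
  have hsumpC : ∑ c : C, pC p c = 1 := sum_pC p hsum
  -- the natural feasible point
  have hfeas : (pXYC p x y, pXC p x) ∈ feasibleSet p x y := by
    refine ⟨fun c => ?_, rfl, rfl⟩
    have h1 : pXY p x y - pXYC p x y c ≤ 1 - pC p c := by
      have e1 : ∑ c' ∈ Finset.univ.erase c, pXYC p x y c' + pXYC p x y c
          = pXY p x y := Finset.sum_erase_add _ _ (Finset.mem_univ c)
      have e2 : ∑ c' ∈ Finset.univ.erase c, pC p c' + pC p c = 1 := by
        rw [Finset.sum_erase_add _ _ (Finset.mem_univ c), hsumpC]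
      have := Finset.sum_le_sum (s := Finset.univ.erase c)
        (fun c' _ => pXYC_le_pC p hp x y c')
      linarith
    have h2 : pX p x - pXC p x c ≤ 1 - pC p c := by
      have e1 : ∑ c' ∈ Finset.univ.erase c, pXC p x c' + pXC p x c
          = pX p x := Finset.sum_erase_add _ _ (Finset.mem_univ c)
      have e2 : ∑ c' ∈ Finset.univ.erase c, pC p c' + pC p c = 1 := by
        rw [Finset.sum_erase_add _ _ (Finset.mem_univ c), hsumpC]
      have := Finset.sum_le_sum (s := Finset.univ.erase c)
        (fun c' _ => pXC_le_pC p hp x c')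
      linarith
    have h3 : pXYC p x y c ≤ pXY p x y :=
      Finset.single_le_sum (f := fun c' => p (c', x, y)) (fun _ _ => hp _)
        (Finset.mem_univ c)
    have h4 : pXC p x c ≤ pX p x :=
      Finset.single_le_sum (f := fun c' => ∑ y' : Y, p (c', x, y'))
        (fun _ _ => Finset.sum_nonneg fun _ _ => hp _) (Finset.mem_univ c)
    exact ⟨hp _, pXYC_le_pXC p hp x y c, pXC_le_pC p hp x c, hpos c, h3, h4,
      by linarith, by linarith⟩
  have hmem : (∑ c : C, pXYC p x y c * pC p c / pXC p x c)
      ∈ objective p '' feasibleSet p x y := ⟨_, hfeas, rfl⟩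
  have hbddb : BddBelow (objective p '' feasibleSet p x y) := by
    refine ⟨0, ?_⟩
    rintro v ⟨ab, hab, rfl⟩
    exact Finset.sum_nonneg fun c _ =>
      div_nonneg (mul_nonneg (hab.1 c).1 (pC_nonneg p hp c)) (hab.1 c).2.2.2.1.le
  have hbdda : BddAbove (objective p '' feasibleSet p x y) := by
    refine ⟨1, ?_⟩
    rintro v ⟨ab, hab, rfl⟩
    have : objective p ab ≤ ∑ c : C, pC p c := by
      refine Finset.sum_le_sum fun c _ => ?_
      have hb := (hab.1 c).2.2.2.1
      rw [div_le_iff₀ hb]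
      have := (hab.1 c).2.1
      nlinarith [pC_nonneg p hp c]
    simpa [hsumpC] using this
  exact ⟨csInf_le hbddb hmem, le_csSup hbdda hmem⟩
end

section
/- Let C be a finite nonempty type and let p be a probability mass function on a finite product type C × X × Y; fix x ∈ X and y ∈ Y. Let (a, b) ∈ (C → ℝ) × (C → ℝ) be any pair of vectors satisfying: for every c ∈ C, 0 ≤ a_c ≤ b_c ≤ p(C = c) and 0 < b_c, and Σ_c a_c = p(X = x, Y = y) and Σ_c b_c = p(X = x). Then the objective value satisfies p(X = x, Y = y) ≤ Σ_c a_c · p(C = c) / b_c ≤ 1 − (p(X = x) − p(X = x, Y = y)). In particular, the optimization-based causal bounds are at least as tight as the Tian–Pearl bounds. -/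
/-! STATEMENT 2: every feasible point of the causal-bound optimization problem
has objective value within the Tian–Pearl bounds
`p(x,y) ≤ Σ_c a_c·p(c)/b_c ≤ 1 − (p(x) − p(x,y))`. -/

open Finset

theorem objective_within_tian_pearl_bounds
    {C X Y : Type*} [Fintype C] [Fintype X] [Fintype Y] [Nonempty C]
    (p : C × X × Y → ℝ) (hp : ∀ z, 0 ≤ p z) (hsum : ∑ z : C × X × Y, p z = 1)
    (x : X) (y : Y)
    (a b : C → ℝ)
    (hfeas : ∀ c : C, 0 ≤ a c ∧ a c ≤ b c ∧ b c ≤ pC p c ∧ 0 < b c)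
    (ha : (∑ c : C, a c) = pXY p x y)
    (hb : (∑ c : C, b c) = pX p x) :
    pXY p x y ≤ (∑ c : C, a c * pC p c / b c) ∧
    (∑ c : C, a c * pC p c / b c) ≤ 1 - (pX p x - pXY p x y) := by
  have hpC1 : (∑ c : C, pC p c) = 1 := by
    rw [← hsum]
    simp [pC, Fintype.sum_prod_type]
  constructor
  · rw [← ha]
    apply Finset.sum_le_sum
    intro c _
    obtain ⟨h0, hab, hbp, hbpos⟩ := hfeas c
    rw [le_div_iff₀ hbpos]
    nlinarith
  · have key : ∀ c : C, a c * pC p c / b c ≤ a c + (pC p c - b c) := by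
      intro c
      obtain ⟨h0, hab, hbp, hbpos⟩ := hfeas c
      rw [div_le_iff₀ hbpos]
      nlinarith
    calc (∑ c : C, a c * pC p c / b c) ≤ ∑ c : C, (a c + (pC p c - b c)) :=
          Finset.sum_le_sum fun c _ => key c
      _ = (∑ c : C, a c) + ((∑ c : C, pC p c) - ∑ c : C, b c) := by
          rw [Finset.sum_add_distrib, Finset.sum_sub_distrib]
      _ = 1 - (pX p x - pXY p x y) := by rw [ha, hb, hpC1]; ring
end

section
/- Let C, X, Y be finite nonempty types and let p be a probability mass function on C × X × Y. Fix x ∈ X and y ∈ Y, and assume p(X = x, C = c) > 0 for every c ∈ C. Then the back-door adjusted causal effect satisfies the Tian–Pearl bounds: p(X = x, Y = y) ≤ Σ_c p(X = x, Y = y, C = c) · p(C = c) / p(X = x, C = c) ≤ 1 − (p(X = x) − p(X = x, Y = y)). -/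
/-! STATEMENT 3: the back-door adjusted causal effect
`P(y|do(x)) = Σ_c p(x,y,c)·p(c)/p(x,c)` satisfies the Tian–Pearl bounds
`p(x,y) ≤ P(y|do(x)) ≤ 1 − (p(x) − p(x,y))`. -/

open Finset

theorem backdoor_satisfies_tian_pearl_bounds
    {C X Y : Type*} [Fintype C] [Fintype X] [Fintype Y]
    [Nonempty C] [Nonempty X] [Nonempty Y]
    (p : C × X × Y → ℝ) (hp : ∀ z, 0 ≤ p z) (hsum : ∑ z : C × X × Y, p z = 1)
    (x : X) (y : Y)
    (hpos : ∀ c : C, 0 < pXC p x c) :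
    pXY p x y ≤ (∑ c : C, pXYC p x y c * pC p c / pXC p x c) ∧
    (∑ c : C, pXYC p x y c * pC p c / pXC p x c) ≤ 1 - (pX p x - pXY p x y) := by
  have ha : ∀ c, 0 ≤ pXYC p x y c := fun c => hp _
  have hab : ∀ c, pXYC p x y c ≤ pXC p x c := by
    intro c
    exact Finset.single_le_sum (f := fun y' => p (c, x, y')) (fun i _ => hp _) (mem_univ y)
  have hbd : ∀ c, pXC p x c ≤ pC p c := by
    intro c
    exact Finset.single_le_sum (f := fun x' => ∑ y' : Y, p (c, x', y'))
      (fun i _ => Finset.sum_nonneg fun _ _ => hp _) (mem_univ x)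
  have hsumC : ∑ c : C, pC p c = 1 := by
    rw [← hsum, Fintype.sum_prod_type]
    simp [pC, Fintype.sum_prod_type]
  constructor
  · rw [pXY]
    apply Finset.sum_le_sum
    intro c _
    have hb := hpos c
    rw [div_eq_mul_inv, mul_assoc]
    nth_rewrite 1 [show p (c, x, y) = pXYC p x y c * 1 from (mul_one _).symm]
    have : (1:ℝ) ≤ pC p c * (pXC p x c)⁻¹ := by
      rw [← div_eq_mul_inv, le_div_iff₀ hb, one_mul]; exact hbd c
    exact mul_le_mul_of_nonneg_left this (ha c)
  · have key : ∀ c : C, pXYC p x y c * pC p c / pXC p x c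
        ≤ pC p c - pXC p x c + pXYC p x y c := by
      intro c
      rw [div_le_iff₀ (hpos c)]
      nlinarith [mul_nonneg (sub_nonneg.2 (hab c)) (sub_nonneg.2 (hbd c)), hpos c]
    calc (∑ c : C, pXYC p x y c * pC p c / pXC p x c)
        ≤ ∑ c : C, (pC p c - pXC p x c + pXYC p x y c) :=
          Finset.sum_le_sum fun c _ => key c
      _ = 1 - (pX p x - pXY p x y) := by
          rw [Finset.sum_add_distrib, Finset.sum_sub_distrib, hsumC]
          simp [pX, pXY, pXC, pXYC]; ring
end

section
/- Let y_0 < y_1 < ... < y_n be real numbers, let α ∈ (0, 1], and let a_0, ..., a_n and b_0, ..., b_n be reals with 0 ≤ a_i ≤ b_i ≤ 1 for all i. Define the feasible set S = { q ∈ ℝ^{n+1} : a_i ≤ q_i ≤ b_i for all i, q_i ≥ 0, and Σ_{i=0}^n q_i = 1 }, and for q ∈ S define m(q) = (1/α) · ( Σ_{i=0}^{k(q)−1} y_i q_i + y_{k(q)} · (α − Σ_{i=0}^{k(q)−1} q_i) ), where k(q) is the smallest index with Σ_{i=0}^{k(q)} q_i ≥ α. Let Y be a random variable taking value y_i with probability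 p_i, where p ∈ S. Then inf_{q ∈ S} m(q) ≤ CVaR_α(Y) ≤ sup_{q ∈ S} m(q). -/
/-! STATEMENT 5: the CVaR of a discrete random variable whose probability
vector `p` lies in the feasible set `S` (componentwise bounds `a_i ≤ q_i ≤ b_i`,
nonnegativity and `Σ q_i = 1`) is sandwiched between the infimum and supremum
over `S` of the closed-form CVaR objective `m(q)`. -/

open Finset

/-- CVaR at level `α` of a discrete random variable taking value `y i` with
probability `q i` for `i = 0, …, n`:
`CVaR_α(Y) = sup_ν { ν − (1/α)·E[(ν − Y)^+] }`. -/
noncomputable def discreteCVaR (α : ℝ) (n : ℕ) (y q : ℕ → ℝ) : ℝ :=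
  ⨆ ν : ℝ, (ν - (1 / α) * ∑ i ∈ Finset.range (n + 1), q i * max (ν - y i) 0)

/-- `k(q)`: the smallest index `k` such that `Σ_{i=0}^k q_i ≥ α`. -/
noncomputable def kIdx (α : ℝ) (q : ℕ → ℝ) : ℕ :=
  sInf {k : ℕ | α ≤ ∑ i ∈ Finset.range (k + 1), q i}

/-- The closed-form CVaR objective
`m(q) = (1/α)·( Σ_{i<k(q)} y_i q_i + y_{k(q)}·(α − Σ_{i<k(q)} q_i) )`. -/
noncomputable def mObj (α : ℝ) (y q : ℕ → ℝ) : ℝ :=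
  (1 / α) * ((∑ i ∈ Finset.range (kIdx α q), y i * q i) +
    y (kIdx α q) * (α - ∑ i ∈ Finset.range (kIdx α q), q i))

lemma kIdx_spec (n : ℕ) (α : ℝ) (hα0 : 0 < α) (hα1 : α ≤ 1) (q : ℕ → ℝ)
    (hq1 : ∑ i ∈ Finset.range (n+1), q i = 1) :
    kIdx α q ≤ n ∧ (∑ i ∈ Finset.range (kIdx α q), q i) < α ∧
      α ≤ ∑ i ∈ Finset.range (kIdx α q + 1), q i := by
  have hne : n ∈ {k : ℕ | α ≤ ∑ i ∈ Finset.range (k + 1), q i} := by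
    simpa [hq1] using hα1
  refine ⟨Nat.sInf_le hne, ?_, Nat.sInf_mem ⟨n, hne⟩⟩
  rcases Nat.eq_zero_or_pos (kIdx α q) with h | h
  · simpa [h] using hα0
  · have hlt : kIdx α q - 1 < kIdx α q := Nat.sub_lt h one_pos
    have := Nat.notMem_of_lt_sInf hlt
    simp only [Set.mem_setOf_eq, not_le] at this
    have h1 : kIdx α q - 1 + 1 = kIdx α q := Nat.succ_pred_eq_of_pos h
    rwa [h1] at this

lemma cvar_eq (n : ℕ) (y : ℕ → ℝ) (α : ℝ) (hα0 : 0 < α) (hα1 : α ≤ 1)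
    (hmono : ∀ i j, i < j → j ≤ n → y i < y j) (q : ℕ → ℝ)
    (hq0 : ∀ i, i ≤ n → 0 ≤ q i)
    (hq1 : ∑ i ∈ Finset.range (n+1), q i = 1) :
    discreteCVaR α n y q = mObj α y q := by
  obtain ⟨hkn, hkl, hku⟩ := kIdx_spec n α hα0 hα1 q hq1
  set k := kIdx α q with hk
  set P := ∑ i ∈ Finset.range k, q i with hP
  have hqk : 0 < q k := by
    have : P + q k = ∑ i ∈ Finset.range (k+1), q i := (Finset.sum_range_succ q k).symm
    nlinarith [hku]
  set f : ℝ → ℝ :=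
    fun ν => ν - (1 / α) * ∑ i ∈ Finset.range (n + 1), q i * max (ν - y i) 0 with hf
  -- value at y k
  have hfyk : f (y k) = mObj α y q := by
    have hsum : ∑ i ∈ Finset.range (n + 1), q i * max (y k - y i) 0
        = ∑ i ∈ Finset.range k, q i * (y k - y i) := by
      rw [Finset.range_eq_Ico,
        ← Finset.sum_Ico_consecutive _ (Nat.zero_le k) (by omega : k ≤ n+1)]
      have h2 : ∑ i ∈ Finset.Ico k (n+1), q i * max (y k - y i) 0 = 0 := by
        apply Finset.sum_eq_zero
        intro i hi
        simp only [Finset.mem_Ico] at hi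
        have : y k ≤ y i := by
          rcases eq_or_lt_of_le hi.1 with h | h
          · rw [h]
          · exact le_of_lt (hmono k i h (by omega))
        rw [max_eq_right (by linarith)]
        ring
      rw [h2, add_zero, ← Finset.range_eq_Ico]
      apply Finset.sum_congr rfl
      intro i hi
      simp only [Finset.mem_range] at hi
      have : y i < y k := hmono i k hi (by omega)
      rw [max_eq_left (by linarith)]
    have hexp : ∑ i ∈ Finset.range k, q i * (y k - y i)
        = y k * P - ∑ i ∈ Finset.range k, y i * q i := by
      rw [hP, Finset.mul_sum, ← Finset.sum_sub_distrib]
      apply Finset.sum_congr rfl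
      intro i _; ring
    simp only [hf, mObj, ← hk, hsum, hexp, ← hP]
    field_simp
    ring
  -- f ν ≤ f (y k) for all ν
  have hub : ∀ ν, f ν ≤ f (y k) := by
    intro ν
    set c : ℝ := (α - P) / q k with hc
    have hc0 : 0 ≤ c := div_nonneg (by linarith) hqk.le
    have hc1 : c ≤ 1 := by
      rw [div_le_one hqk]
      have : P + q k = ∑ i ∈ Finset.range (k+1), q i := (Finset.sum_range_succ q k).symm
      linarith [hku]
    set s : ℕ → ℝ := fun i => if i < k then 1 else if i = k then c else 0 with hs
    have hkey : ∀ i ∈ Finset.range (n+1),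
        q i * max (y k - y i) 0 + q i * s i * (ν - y k) ≤ q i * max (ν - y i) 0 := by
      intro i hi
      simp only [Finset.mem_range] at hi
      have hqi : 0 ≤ q i := hq0 i (by omega)
      rcases lt_trichotomy i k with h | h | h
      · have hyi : y i < y k := hmono i k h (by omega)
        have : max (y k - y i) 0 = y k - y i := max_eq_left (by linarith)
        simp only [hs, if_pos h, this]
        have : y k - y i + 1 * (ν - y k) ≤ max (ν - y i) 0 := by
          have := le_max_left (ν - y i) 0; linarith
        nlinarith
      · have hsi : s i = c := by simp [hs, h]
        have hyik : y i = y k := by rw [h]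
        have h1 : c * (ν - y k) ≤ max (ν - y k) 0 := by
          rcases le_or_gt (y k) ν with h' | h'
          · calc c * (ν - y k) ≤ 1 * (ν - y k) := by nlinarith
              _ ≤ max (ν - y k) 0 := by simpa using le_max_left (ν - y k) 0
          · calc c * (ν - y k) ≤ 0 := by nlinarith
              _ ≤ max (ν - y k) 0 := le_max_right _ _
        rw [hsi, hyik, sub_self, max_eq_right le_rfl]
        have h2 := mul_le_mul_of_nonneg_left h1 hqi
        calc q i * 0 + q i * c * (ν - y k) = q i * (c * (ν - y k)) := by ring
          _ ≤ q i * max (ν - y k) 0 := h2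
      · have hyi : y k < y i := hmono k i h (by omega)
        have h0 : max (y k - y i) 0 = 0 := max_eq_right (by linarith)
        simp only [hs, if_neg (by omega : ¬ i < k), if_neg (by omega : ¬ i = k), h0]
        have := le_max_right (ν - y i) 0
        nlinarith
    have hsumS : ∑ i ∈ Finset.range (n+1), q i * s i = α := by
      have hsplit : ∑ i ∈ Finset.range (n+1), q i * s i
          = ∑ i ∈ Finset.range (k+1), q i * s i
            + ∑ i ∈ Finset.Ico (k+1) (n+1), q i * s i := by
        rw [Finset.range_eq_Ico,
          ← Finset.sum_Ico_consecutive _ (Nat.zero_le (k+1)) (by omega : k+1 ≤ n+1),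
          ← Finset.range_eq_Ico]
      have hz : ∑ i ∈ Finset.Ico (k+1) (n+1), q i * s i = 0 := by
        apply Finset.sum_eq_zero
        intro i hi
        simp only [Finset.mem_Ico] at hi
        simp [hs, if_neg (by omega : ¬ i < k), if_neg (by omega : ¬ i = k)]
      have h1 : ∑ i ∈ Finset.range k, q i * s i = P := by
        rw [hP]
        apply Finset.sum_congr rfl
        intro i hi
        simp only [Finset.mem_range] at hi
        simp [hs, if_pos hi]
      rw [hsplit, hz, add_zero, Finset.sum_range_succ, h1]
      simp only [hs, lt_irrefl, if_neg (lt_irrefl k), if_pos rfl]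
      rw [hc]
      simp only [if_true]
      have hmc : q k * ((α - P) / q k) = α - P := mul_div_cancel₀ (α - P) hqk.ne'
      linarith
    have hsum_le : ∑ i ∈ Finset.range (n+1), q i * max (y k - y i) 0 + α * (ν - y k)
        ≤ ∑ i ∈ Finset.range (n+1), q i * max (ν - y i) 0 := by
      have := Finset.sum_le_sum hkey
      rw [Finset.sum_add_distrib] at this
      have h2 : ∑ i ∈ Finset.range (n+1), q i * s i * (ν - y k) = α * (ν - y k) := by
        rw [← Finset.sum_mul, hsumS]
      linarith [h2 ▸ this]
    simp only [hf]
    have hα' : 0 < 1 / α := by positivity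
    have hmul := mul_le_mul_of_nonneg_left hsum_le hα'.le
    have hαne : α ≠ 0 := ne_of_gt hα0
    have hdist : (1/α) * (∑ i ∈ Finset.range (n+1), q i * max (y k - y i) 0
          + α * (ν - y k))
        = (1/α) * (∑ i ∈ Finset.range (n+1), q i * max (y k - y i) 0)
          + (ν - y k) := by
      field_simp
    rw [hdist] at hmul
    linarith
  have hbdd : BddAbove (Set.range f) := by
    refine ⟨f (y k), ?_⟩
    rintro x ⟨ν, rfl⟩
    exact hub ν
  rw [discreteCVaR, ← hfyk]
  exact le_antisymm (ciSup_le hub) (le_ciSup hbdd (y k))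

lemma mObj_bounds (n : ℕ) (y : ℕ → ℝ) (α : ℝ) (hα0 : 0 < α) (hα1 : α ≤ 1)
    (hmono : ∀ i j, i < j → j ≤ n → y i < y j) (q : ℕ → ℝ)
    (hq0 : ∀ i, i ≤ n → 0 ≤ q i)
    (hq1 : ∑ i ∈ Finset.range (n+1), q i = 1) :
    y 0 ≤ mObj α y q ∧ mObj α y q ≤ y n := by
  obtain ⟨hkn, hkl, hku⟩ := kIdx_spec n α hα0 hα1 q hq1
  set k := kIdx α q with hk
  set P := ∑ i ∈ Finset.range k, q i with hP
  have hyle : ∀ i, i ≤ n → y i ≤ y n := by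
    intro i hi
    rcases eq_or_lt_of_le hi with h | h
    · rw [h]
    · exact le_of_lt (hmono i n h le_rfl)
  have hyge : ∀ i, i ≤ n → y 0 ≤ y i := by
    intro i hi
    rcases Nat.eq_zero_or_pos i with h | h
    · rw [h]
    · exact le_of_lt (hmono 0 i h hi)
  have hup : ∑ i ∈ Finset.range k, y i * q i ≤ y n * P := by
    rw [hP, Finset.mul_sum]
    apply Finset.sum_le_sum
    intro i hi
    simp only [Finset.mem_range] at hi
    exact mul_le_mul_of_nonneg_right (hyle i (by omega)) (hq0 i (by omega))
  have hlo : y 0 * P ≤ ∑ i ∈ Finset.range k, y i * q i := by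
    rw [hP, Finset.mul_sum]
    apply Finset.sum_le_sum
    intro i hi
    simp only [Finset.mem_range] at hi
    exact mul_le_mul_of_nonneg_right (hyge i (by omega)) (hq0 i (by omega))
  have hykn : y k ≤ y n := hyle k hkn
  have hyk0 : y 0 ≤ y k := hyge k hkn
  have hPα : P ≤ α := hkl.le
  constructor
  · have h1 : y 0 * α ≤ (∑ i ∈ Finset.range k, y i * q i) + y k * (α - P) := by
      nlinarith
    have h2 := mul_le_mul_of_nonneg_left h1 (le_of_lt (by positivity : (0:ℝ) < 1/α))
    have h3 : (1/α) * (y 0 * α) = y 0 := by field_simp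
    rw [h3] at h2
    simpa [mObj, ← hk, ← hP] using h2
  · have h1 : (∑ i ∈ Finset.range k, y i * q i) + y k * (α - P) ≤ y n * α := by
      nlinarith
    have h2 := mul_le_mul_of_nonneg_left h1 (le_of_lt (by positivity : (0:ℝ) < 1/α))
    have h3 : (1/α) * (y n * α) = y n := by field_simp
    rw [h3] at h2
    simpa [mObj, ← hk, ← hP] using h2

theorem cvar_between_inf_and_sup_of_mObj
    (n : ℕ) (y : ℕ → ℝ) (α : ℝ) (hα : α ∈ Set.Ioc (0 : ℝ) 1)
    (hmono : ∀ i j, i < j → j ≤ n → y i < y j)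
    (a b : ℕ → ℝ) (hab : ∀ i, i ≤ n → 0 ≤ a i ∧ a i ≤ b i ∧ b i ≤ 1)
    (S : Set (ℕ → ℝ))
    (hS : S = {q | (∀ i, i ≤ n → a i ≤ q i ∧ q i ≤ b i ∧ 0 ≤ q i) ∧
                   ∑ i ∈ Finset.range (n + 1), q i = 1})
    (p : ℕ → ℝ) (hp : p ∈ S) :
    sInf ((fun q => mObj α y q) '' S) ≤ discreteCVaR α n y p ∧
    discreteCVaR α n y p ≤ sSup ((fun q => mObj α y q) '' S) := by
  obtain ⟨hα0, hα1⟩ := hα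
  have hp' := hp
  rw [hS] at hp'
  obtain ⟨hp1, hp2⟩ := hp'
  have heq := cvar_eq n y α hα0 hα1 hmono p (fun i hi => (hp1 i hi).2.2) hp2
  rw [heq]
  have hmem : mObj α y p ∈ (fun q => mObj α y q) '' S := ⟨p, hp, rfl⟩
  constructor
  · refine csInf_le ⟨y 0, ?_⟩ hmem
    rintro x ⟨q, hq, rfl⟩
    rw [hS] at hq
    exact (mObj_bounds n y α hα0 hα1 hmono q (fun i hi => (hq.1 i hi).2.2) hq.2).1
  · refine le_csSup ⟨y n, ?_⟩ hmem
    rintro x ⟨q, hq, rfl⟩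
    rw [hS] at hq
    exact (mObj_bounds n y α hα0 hα1 hmono q (fun i hi => (hq.1 i hi).2.2) hq.2).2
end

section
/- Let α ∈ (0, 1), q ∈ [0, 1], and let M ≥ 1/α be a real constant. Suppose m ∈ {0, 1} and n ∈ ℝ satisfy the constraints: q ≤ α + M(1 − m), −q ≤ −α + M m, n ≤ M m, n ≤ q/α, n ≥ q/α − M(1 − m), and n ≥ 0. Then m − n = max(0, 1 − q/α). Moreover, such a feasible pair (m, n) exists: if q ≥ α then (m, n) = (0, 0) is feasible, and if q ≤ α then (m, n) = (1, q/α) is feasible. Consequently the minimum and the maximum of the objective m − n over the feasible set both equal max(0, 1 − q/α). -/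
/-! STATEMENT 7: the big-M mixed-integer reformulation of the binary-outcome
CVaR expression: every feasible pair `(m, n)` has objective
`m − n = max(0, 1 − q/α)`, a feasible pair exists, and hence both the minimum
and the maximum of the objective over the feasible set equal
`max(0, 1 − q/α)`. -/

/-- The feasibility constraints of the mixed-integer reformulation (with the
binary constraint `m = 0 ∨ m = 1` included). -/
def MIPFeasible (α q M m n : ℝ) : Prop :=
  (m = 0 ∨ m = 1) ∧
  q ≤ α + M * (1 - m) ∧
  -q ≤ -α + M * m ∧
  n ≤ M * m ∧
  n ≤ q / α ∧
  q / α - M * (1 - m) ≤ n ∧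
  0 ≤ n

theorem mip_reformulation_of_binary_cvar
    (α q M : ℝ) (hα0 : 0 < α) (hα1 : α < 1) (hq0 : 0 ≤ q) (hq1 : q ≤ 1)
    (hM : 1 / α ≤ M) :
    (∀ m n : ℝ, MIPFeasible α q M m n → m - n = max 0 (1 - q / α)) ∧
    (α ≤ q → MIPFeasible α q M 0 0) ∧
    (q ≤ α → MIPFeasible α q M 1 (q / α)) ∧
    IsLeast {r : ℝ | ∃ m n : ℝ, MIPFeasible α q M m n ∧ r = m - n}
      (max 0 (1 - q / α)) ∧
    IsGreatest {r : ℝ | ∃ m n : ℝ, MIPFeasible α q M m n ∧ r = m - n}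
      (max 0 (1 - q / α)) := by
  have hM1 : 1 ≤ M := le_trans (by rw [le_div_iff₀ hα0]; nlinarith) hM
  have hMqa : q / α ≤ M := le_trans (by rw [div_le_div_iff₀ hα0 hα0]; nlinarith) hM
  have hqa0 : 0 ≤ q / α := div_nonneg hq0 hα0.le
  have hobj : ∀ m n : ℝ, MIPFeasible α q M m n → m - n = max 0 (1 - q / α) := by
    rintro m n ⟨hm, h1, h2, h3, h4, h5, h6⟩
    rcases hm with rfl | rfl
    · have hαq : α ≤ q := by linarith [h2]
      have h1q : q / α ≥ 1 := (one_le_div hα0).2 hαq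
      have hn : n = 0 := le_antisymm (by linarith [h3]) h6
      rw [hn, max_eq_left (by linarith)]; ring
    · have hqα : q ≤ α := by linarith [h1]
      have h1q : q / α ≤ 1 := (div_le_one hα0).2 hqα
      have hn : n = q / α := le_antisymm h4 (by linarith [h5])
      rw [hn, max_eq_right (by linarith)]
  have hf0 : α ≤ q → MIPFeasible α q M 0 0 := by
    intro h
    refine ⟨Or.inl rfl, by simp; linarith, by simpa using h, by simp,
      hqa0, by simp; linarith, le_refl 0⟩
  have hf1 : q ≤ α → MIPFeasible α q M 1 (q / α) := by
    intro h
    refine ⟨Or.inr rfl, by simp; linarith, by simp; linarith, by simpa using hMqa,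
      le_refl _, by simp, hqa0⟩
  have hmem : max 0 (1 - q / α) ∈ {r : ℝ | ∃ m n : ℝ, MIPFeasible α q M m n ∧ r = m - n} := by
    rcases le_total α q with h | h
    · exact ⟨0, 0, hf0 h, by
        have : q / α ≥ 1 := (one_le_div hα0).2 h
        rw [max_eq_left (by linarith)]; ring⟩
    · exact ⟨1, q / α, hf1 h, by
        have : q / α ≤ 1 := (div_le_one hα0).2 h
        rw [max_eq_right (by linarith)]⟩
  refine ⟨hobj, hf0, hf1, ⟨hmem, ?_⟩, ⟨hmem, ?_⟩⟩ <;>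
    rintro r ⟨m, n, hfeas, rfl⟩ <;> rw [hobj m n hfeas]
end

section
/- Let Y be a random variable taking finitely many real values and let α ∈ (0, 1). Let q_α = inf{ y ∈ ℝ : P(Y ≤ y) ≥ α } be the lower α-quantile of Y. Then the supremum defining CVaR is attained at q_α: CVaR_α(Y) = q_α − (1/α) · E[(q_α − Y)^+]. -/
/-! STATEMENT 11: for a random variable taking finitely many real values and
`α ∈ (0,1)`, the supremum defining CVaR is attained at the lower `α`-quantile
`q_α = inf { y | P(Y ≤ y) ≥ α }`. -/

open MeasureTheory

theorem cvar_sup_attained_at_lower_quantile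
    {Ω : Type*} [MeasurableSpace Ω] (P : Measure Ω) [IsProbabilityMeasure P]
    (Y : Ω → ℝ) (hY : Measurable Y) (hfin : (Set.range Y).Finite)
    (α : ℝ) (hα0 : 0 < α) (hα1 : α < 1)
    (qα : ℝ) (hqα : qα = sInf {y : ℝ | α ≤ (P {ω | Y ω ≤ y}).toReal}) :
    (⨆ ν : ℝ, (ν - (1 / α) * ∫ ω, max (ν - Y ω) 0 ∂P)) =
      qα - (1 / α) * ∫ ω, max (qα - Y ω) 0 ∂P := by
  classical
  set F : ℝ → ℝ := fun y => (P {ω | Y ω ≤ y}).toReal with hFdef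
  have hmeas : ∀ y : ℝ, MeasurableSet {ω | Y ω ≤ y} := fun y => hY measurableSet_Iic
  have hmeaslt : MeasurableSet {ω | Y ω < qα} := hY measurableSet_Iio
  -- a uniform bound on |Y|
  obtain ⟨C, hC0, hC⟩ : ∃ C : ℝ, 0 ≤ C ∧ ∀ ω, |Y ω| ≤ C := by
    obtain ⟨C, hCb⟩ := (hfin.image abs).bddAbove
    exact ⟨max C 0, le_max_right _ _,
      fun ω => le_trans (hCb ⟨Y ω, ⟨ω, rfl⟩, rfl⟩) (le_max_left _ _)⟩
  -- integrability of the positive parts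
  have hint : ∀ ν : ℝ, Integrable (fun ω => max (ν - Y ω) 0) P := by
    intro ν
    refine Integrable.mono' (integrable_const (|ν| + C))
      ((measurable_const.sub hY).max measurable_const).aestronglyMeasurable ?_
    filter_upwards with ω
    rw [Real.norm_eq_abs, abs_of_nonneg (le_max_right _ _)]
    refine max_le ?_ (by have := abs_nonneg ν; linarith)
    have h1 : ν - Y ω ≤ |ν| + |Y ω| := by
      have := abs_sub_abs_le_abs_sub ν (Y ω)
      have := le_abs_self (ν - Y ω)
      have := abs_sub ν (Y ω)
      calc ν - Y ω ≤ |ν - Y ω| := le_abs_self _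
        _ ≤ |ν| + |Y ω| := abs_sub _ _
    have := hC ω
    linarith
  -- C belongs to the quantile set
  have hCmem : α ≤ F C := by
    have huniv : {ω | Y ω ≤ C} = Set.univ := by
      ext ω; simp only [Set.mem_setOf_eq, Set.mem_univ, iff_true]
      exact le_trans (le_abs_self _) (hC ω)
    rw [hFdef]
    simp only [huniv, measure_univ, ENNReal.toReal_one]
    linarith
  -- every element of the quantile set dominates an element of it lying in the range of Y
  have hstep : ∀ y : ℝ, α ≤ F y → ∃ t, t ∈ Set.range Y ∧ α ≤ F t ∧ t ≤ y := by
    intro y hy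
    have hne : {ω | Y ω ≤ y}.Nonempty := by
      by_contra h
      rw [Set.not_nonempty_iff_eq_empty] at h
      rw [hFdef] at hy
      simp only [h, measure_empty, ENNReal.toReal_zero] at hy
      linarith
    obtain ⟨ω₀, hω₀⟩ := hne
    set T' : Finset ℝ := hfin.toFinset.filter (· ≤ y) with hT'
    have hT'ne : T'.Nonempty :=
      ⟨Y ω₀, by
        simp only [hT', Finset.mem_filter, Set.Finite.mem_toFinset]
        exact ⟨⟨ω₀, rfl⟩, hω₀⟩⟩
    set t := T'.max' hT'ne with ht
    have htmem : t ∈ T' := T'.max'_mem hT'ne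
    have htrange : t ∈ Set.range Y := by
      have := (Finset.mem_filter.mp htmem).1
      rwa [Set.Finite.mem_toFinset] at this
    have htley : t ≤ y := (Finset.mem_filter.mp htmem).2
    have hseteq : {ω | Y ω ≤ y} = {ω | Y ω ≤ t} := by
      ext ω
      simp only [Set.mem_setOf_eq]
      constructor
      · intro h
        refine T'.le_max' (Y ω) ?_
        simp only [hT', Finset.mem_filter, Set.Finite.mem_toFinset]
        exact ⟨⟨ω, rfl⟩, h⟩
      · intro h; exact le_trans h htley
    refine ⟨t, htrange, ?_, htley⟩
    show α ≤ (P {ω | Y ω ≤ t}).toReal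
    rw [← hseteq]
    exact hy
  -- the candidate minimum of the quantile set
  set A : Finset ℝ := hfin.toFinset.filter (fun t => α ≤ F t) with hA
  have hAne : A.Nonempty := by
    obtain ⟨t, ht1, ht2, _⟩ := hstep C hCmem
    refine ⟨t, ?_⟩
    simp only [hA, Finset.mem_filter, Set.Finite.mem_toFinset]
    exact ⟨ht1, ht2⟩
  set t₀ := A.min' hAne with ht₀
  have ht₀mem : α ≤ F t₀ := (Finset.mem_filter.mp (A.min'_mem hAne)).2
  have ht₀lb : ∀ y : ℝ, α ≤ F y → t₀ ≤ y := by
    intro y hy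
    obtain ⟨t, ht1, ht2, ht3⟩ := hstep y hy
    have : t ∈ A := by
      simp only [hA, Finset.mem_filter, Set.Finite.mem_toFinset]
      exact ⟨ht1, ht2⟩
    exact le_trans (A.min'_le t this) ht3
  have hq : qα = t₀ := by
    rw [hqα]
    apply le_antisymm
    · exact csInf_le ⟨t₀, fun y hy => ht₀lb y hy⟩ ht₀mem
    · exact le_csInf ⟨C, hCmem⟩ fun y hy => ht₀lb y hy
  have hqmem : α ≤ F qα := hq ▸ ht₀mem
  have hqlb : ∀ y : ℝ, α ≤ F y → qα ≤ y := hq ▸ ht₀lb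
  -- P(Y < qα) ≤ α
  have hlt : (P {ω | Y ω < qα}).toReal ≤ α := by
    by_contra h
    push_neg at h
    have hne : {ω | Y ω < qα}.Nonempty := by
      by_contra h'
      rw [Set.not_nonempty_iff_eq_empty] at h'
      simp only [h', measure_empty, ENNReal.toReal_zero] at h
      linarith
    obtain ⟨ω₀, hω₀⟩ := hne
    set T' : Finset ℝ := hfin.toFinset.filter (· < qα) with hT'
    have hT'ne : T'.Nonempty :=
      ⟨Y ω₀, by
        simp only [hT', Finset.mem_filter, Set.Finite.mem_toFinset]
        exact ⟨⟨ω₀, rfl⟩, hω₀⟩⟩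
    set y' := T'.max' hT'ne with hy'
    have hy'mem : y' ∈ T' := T'.max'_mem hT'ne
    have hy'lt : y' < qα := (Finset.mem_filter.mp hy'mem).2
    have hseteq : {ω | Y ω < qα} = {ω | Y ω ≤ y'} := by
      ext ω
      simp only [Set.mem_setOf_eq]
      constructor
      · intro hω
        refine T'.le_max' (Y ω) ?_
        simp only [hT', Finset.mem_filter, Set.Finite.mem_toFinset]
        exact ⟨⟨ω, rfl⟩, hω⟩
      · intro hω; exact lt_of_le_of_lt hω hy'lt
    have : α ≤ F y' := by
      show α ≤ (P {ω | Y ω ≤ y'}).toReal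
      rw [← hseteq]
      exact le_of_lt h
    have := hqlb y' this
    linarith
  -- the main pointwise/integral inequality: f ν ≤ f qα for every ν
  have main : ∀ ν : ℝ, ν - (1 / α) * ∫ ω, max (ν - Y ω) 0 ∂P ≤
      qα - (1 / α) * ∫ ω, max (qα - Y ω) 0 ∂P := by
    intro ν
    have key : α * (ν - qα) ≤ (∫ ω, max (ν - Y ω) 0 ∂P) - ∫ ω, max (qα - Y ω) 0 ∂P := by
      rcases le_or_gt qα ν with hcase | hcase
      · -- ν ≥ qα
        have hind : Integrable (fun ω => Set.indicator {ω | Y ω ≤ qα} (fun _ => ν - qα) ω) P :=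
          (integrable_const (ν - qα)).indicator (hmeas qα)
        have hpt : ∀ ω, max (qα - Y ω) 0 + Set.indicator {ω | Y ω ≤ qα} (fun _ => ν - qα) ω
            ≤ max (ν - Y ω) 0 := by
          intro ω
          rw [Set.indicator_apply]
          split_ifs with h
          · simp only [Set.mem_setOf_eq] at h
            rw [max_eq_left (by linarith)]
            have := le_max_left (ν - Y ω) (0 : ℝ)
            linarith
          · simp only [Set.mem_setOf_eq, not_le] at h
            rw [max_eq_right (by linarith : qα - Y ω ≤ 0)]
            have := le_max_right (ν - Y ω) (0 : ℝ)
            linarith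
        have hInt := integral_mono ((hint qα).add hind) (hint ν) hpt
        simp only [Pi.add_apply] at hInt
        rw [integral_add (hint qα) hind, integral_indicator_const _ (hmeas qα)] at hInt
        have hF : α ≤ (P {ω | Y ω ≤ qα}).toReal := hqmem
        have hsmul : P.real {ω | Y ω ≤ qα} • (ν - qα) = (P {ω | Y ω ≤ qα}).toReal * (ν - qα) := rfl
        rw [hsmul] at hInt
        nlinarith [hInt, mul_le_mul_of_nonneg_right hF (by linarith : (0:ℝ) ≤ ν - qα)]
      · -- ν < qα
        have hind : Integrable (fun ω => Set.indicator {ω | Y ω < qα} (fun _ => qα - ν) ω) P :=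
          (integrable_const (qα - ν)).indicator hmeaslt
        have hpt : ∀ ω, max (qα - Y ω) 0
            ≤ max (ν - Y ω) 0 + Set.indicator {ω | Y ω < qα} (fun _ => qα - ν) ω := by
          intro ω
          rw [Set.indicator_apply]
          split_ifs with h
          · simp only [Set.mem_setOf_eq] at h
            rw [max_eq_left (by linarith : (0:ℝ) ≤ qα - Y ω)]
            have := le_max_left (ν - Y ω) (0 : ℝ)
            linarith
          · simp only [Set.mem_setOf_eq, not_lt] at h
            rw [max_eq_right (by linarith : qα - Y ω ≤ 0)]
            have := le_max_right (ν - Y ω) (0 : ℝ)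
            linarith
        have hInt := integral_mono (hint qα) ((hint ν).add hind) hpt
        simp only [Pi.add_apply] at hInt
        rw [integral_add (hint ν) hind, integral_indicator_const _ hmeaslt] at hInt
        have hsmul : P.real {ω | Y ω < qα} • (qα - ν) = (P {ω | Y ω < qα}).toReal * (qα - ν) := rfl
        rw [hsmul] at hInt
        nlinarith [hInt, mul_le_mul_of_nonneg_right hlt (by linarith : (0:ℝ) ≤ qα - ν)]
    have hα0' : 0 < 1 / α := by positivity
    have h2 : (1 / α) * (α * (ν - qα)) ≤
        (1 / α) * ((∫ ω, max (ν - Y ω) 0 ∂P) - ∫ ω, max (qα - Y ω) 0 ∂P) :=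
      mul_le_mul_of_nonneg_left key (le_of_lt hα0')
    have hαne : α ≠ 0 := ne_of_gt hα0
    have heq : (1 / α) * (α * (ν - qα)) = ν - qα := by field_simp
    rw [heq, mul_sub] at h2
    linarith
  -- conclude about the supremum
  have hbdd : BddAbove (Set.range fun ν : ℝ => ν - (1 / α) * ∫ ω, max (ν - Y ω) 0 ∂P) := by
    refine ⟨qα - (1 / α) * ∫ ω, max (qα - Y ω) 0 ∂P, ?_⟩
    rintro x ⟨ν, rfl⟩
    exact main ν
  exact le_antisymm (ciSup_le main) (le_ciSup hbdd qα)
end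

section
/- Let U > 0 and α ∈ (0, 1]. Let Y and Z be random variables (possibly on different probability spaces) each taking values in [0, U], with cumulative distribution functions F(y) = P(Y ≤ y) and G(y) = P(Z ≤ y). Suppose sup_{y ∈ [0, U]} |F(y) − G(y)| ≤ ε for some ε ≥ 0. Then |CVaR_α(Y) − CVaR_α(Z)| ≤ U ε / α. -/
/-! STATEMENT 12: if the CDFs of two `[0, U]`-valued random variables are
uniformly `ε`-close on `[0, U]`, then their CVaRs at level `α` differ by at
most `U·ε/α`. -/

open MeasureTheory

/-- `CVaR_α(Y) = sup_ν { ν − (1/α)·E[(ν − Y)^+] }`. -/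
noncomputable def cvar {Ω : Type*} [MeasurableSpace Ω] (P : Measure Ω) (α : ℝ)
    (Y : Ω → ℝ) : ℝ :=
  ⨆ ν : ℝ, (ν - (1 / α) * ∫ ω, max (ν - Y ω) 0 ∂P)

section Aux

variable {Ω : Type*} [MeasurableSpace Ω] (P : Measure Ω) [IsProbabilityMeasure P]
  {U : ℝ} {Y : Ω → ℝ}

lemma aux_integrable (hY : Measurable Y) (hYr : ∀ ω, Y ω ∈ Set.Icc (0 : ℝ) U) (ν : ℝ) :
    Integrable (fun ω => max (ν - Y ω) 0) P := by
  refine Integrable.mono' (integrable_const (max ν 0))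
    ((hY.const_sub ν).max measurable_const).aestronglyMeasurable
    (Filter.Eventually.of_forall fun ω => ?_)
  rw [Real.norm_eq_abs, abs_of_nonneg (le_max_right _ _)]
  exact max_le_max (by linarith [(hYr ω).1]) le_rfl

lemma aux_layer (hY : Measurable Y) (hYr : ∀ ω, Y ω ∈ Set.Icc (0 : ℝ) U) (ν : ℝ) :
    ∫ ω, max (ν - Y ω) 0 ∂P
      = ∫ t in Set.Ioi (0:ℝ), (P {ω | Y ω ≤ ν - t}).toReal := by
  rw [(aux_integrable P hY hYr ν).integral_eq_integral_meas_le
    (Filter.Eventually.of_forall fun ω => le_max_right _ _)]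
  refine setIntegral_congr_fun measurableSet_Ioi fun t ht => ?_
  have hset : {a | t ≤ max (ν - Y a) 0} = {ω | Y ω ≤ ν - t} := by
    ext ω
    simp only [Set.mem_setOf_eq, le_max_iff]
    constructor
    · rintro (h | h)
      · linarith
      · exact absurd h (not_le.2 ht)
    · intro h; left; linarith
  rw [hset]
  rfl

lemma aux_cdf_antitone (ν : ℝ) :
    Antitone (fun t => (P {ω | Y ω ≤ ν - t}).toReal) := by
  intro s t hst
  apply ENNReal.toReal_mono (measure_ne_top _ _)
  exact measure_mono fun ω (h : Y ω ≤ ν - t) => le_trans h (by linarith)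

lemma aux_cdf_integrableOn (hYr : ∀ ω, Y ω ∈ Set.Icc (0 : ℝ) U) (ν : ℝ) :
    IntegrableOn (fun t => (P {ω | Y ω ≤ ν - t}).toReal) (Set.Ioi 0) := by
  refine Integrable.mono'
    ((integrable_indicator_iff measurableSet_Icc).2
        (integrableOn_const measure_Icc_lt_top.ne) :
      Integrable ((Set.Icc (0:ℝ) ν).indicator fun _ => (1:ℝ)) _)
    ((aux_cdf_antitone P ν).measurable.aestronglyMeasurable)
    (ae_restrict_of_forall_mem measurableSet_Ioi fun t ht => ?_)
  rw [Real.norm_eq_abs, abs_of_nonneg ENNReal.toReal_nonneg]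
  by_cases h : t ≤ ν
  · rw [Set.indicator_of_mem (Set.mem_Icc.2 ⟨le_of_lt ht, h⟩)]
    exact ENNReal.toReal_le_of_le_ofReal one_pos.le (by simpa using prob_le_one)
  · push_neg at h
    have hempty : {ω | Y ω ≤ ν - t} = ∅ := by
      ext ω; simp only [Set.mem_setOf_eq, Set.mem_empty_iff_false, iff_false, not_le]
      linarith [(hYr ω).1]
    rw [hempty]
    simp [Set.indicator_apply]
    positivity

lemma aux_bdd {α : ℝ} (hαinv : (1:ℝ) ≤ 1 / α) (hα0 : 0 < α) (hU : 0 < U)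
    (hY : Measurable Y) (hYr : ∀ ω, Y ω ∈ Set.Icc (0 : ℝ) U) (ν : ℝ) :
    ν - (1 / α) * ∫ ω, max (ν - Y ω) 0 ∂P ≤ U := by
  have h1 : max (ν - U) 0 ≤ ∫ ω, max (ν - Y ω) 0 ∂P := by
    have := integral_mono (integrable_const (max (ν - U) 0)) (aux_integrable P hY hYr ν)
      (fun ω => max_le_max (by linarith [(hYr ω).2]) le_rfl)
    simpa using this
  by_cases hν : ν ≤ U
  · have h2 : 0 ≤ ∫ ω, max (ν - Y ω) 0 ∂P := le_trans (le_max_right _ _) h1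
    nlinarith [mul_nonneg (by positivity : (0:ℝ) ≤ 1/α) h2]
  · push_neg at hν
    have h2 : ν - U ≤ ∫ ω, max (ν - Y ω) 0 ∂P := le_trans (le_max_left _ _) h1
    nlinarith [mul_le_mul hαinv h2 (by linarith) (by positivity : (0:ℝ) ≤ 1/α)]

end Aux

theorem cvar_lipschitz_in_cdf
    {Ω₁ Ω₂ : Type*} [MeasurableSpace Ω₁] [MeasurableSpace Ω₂]
    (P : Measure Ω₁) (Q : Measure Ω₂)
    [IsProbabilityMeasure P] [IsProbabilityMeasure Q]
    (U : ℝ) (hU : 0 < U) (α : ℝ) (hα : α ∈ Set.Ioc (0 : ℝ) 1)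
    (Y : Ω₁ → ℝ) (Z : Ω₂ → ℝ) (hY : Measurable Y) (hZ : Measurable Z)
    (hYr : ∀ ω, Y ω ∈ Set.Icc (0 : ℝ) U) (hZr : ∀ ω, Z ω ∈ Set.Icc (0 : ℝ) U)
    (ε : ℝ) (hε : 0 ≤ ε)
    (hFG : ∀ y ∈ Set.Icc (0 : ℝ) U,
      |(P {ω | Y ω ≤ y}).toReal - (Q {ω | Z ω ≤ y}).toReal| ≤ ε) :
    |cvar P α Y - cvar Q α Z| ≤ U * ε / α := by
  obtain ⟨hα0, hα1⟩ := hα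
  have hαinv : (1:ℝ) ≤ 1 / α := (le_div_iff₀ hα0).2 (by linarith)
  set f : ℝ → ℝ := fun ν => ν - (1 / α) * ∫ ω, max (ν - Y ω) 0 ∂P with hf
  set g : ℝ → ℝ := fun ν => ν - (1 / α) * ∫ ω, max (ν - Z ω) 0 ∂Q with hg
  -- pointwise closeness
  have key : ∀ ν : ℝ, |f ν - g ν| ≤ U * ε / α := by
    intro ν
    have hint : |(∫ ω, max (ν - Y ω) 0 ∂P) - ∫ ω, max (ν - Z ω) 0 ∂Q| ≤ U * ε := by
      rw [aux_layer P hY hYr ν, aux_layer Q hZ hZr ν,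
        ← integral_sub (aux_cdf_integrableOn P hYr ν) (aux_cdf_integrableOn Q hZr ν)]
      have hbound : ∀ t ∈ Set.Ioi (0:ℝ),
          ‖(P {ω | Y ω ≤ ν - t}).toReal - (Q {ω | Z ω ≤ ν - t}).toReal‖
            ≤ (Set.Icc (ν - U) ν).indicator (fun _ => ε) t := by
        intro t ht
        rw [Real.norm_eq_abs]
        by_cases hmem : t ∈ Set.Icc (ν - U) ν
        · rw [Set.indicator_of_mem hmem]
          exact hFG (ν - t) ⟨by linarith [hmem.2], by linarith [hmem.1]⟩
        · rw [Set.indicator_of_notMem hmem]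
          rw [Set.mem_Icc, not_and_or] at hmem
          rcases hmem with h | h
          · push_neg at h
            have h1 : {ω | Y ω ≤ ν - t} = Set.univ := by
              ext ω; simp only [Set.mem_setOf_eq, Set.mem_univ, iff_true]
              linarith [(hYr ω).2]
            have h2 : {ω | Z ω ≤ ν - t} = Set.univ := by
              ext ω; simp only [Set.mem_setOf_eq, Set.mem_univ, iff_true]
              linarith [(hZr ω).2]
            simp [h1, h2]
          · push_neg at h
            have h1 : {ω | Y ω ≤ ν - t} = ∅ := by
              ext ω; simp only [Set.mem_setOf_eq, Set.mem_empty_iff_false, iff_false, not_le]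
              linarith [(hYr ω).1]
            have h2 : {ω | Z ω ≤ ν - t} = ∅ := by
              ext ω; simp only [Set.mem_setOf_eq, Set.mem_empty_iff_false, iff_false, not_le]
              linarith [(hZr ω).1]
            simp [h1, h2]
      calc |∫ t in Set.Ioi (0:ℝ),
              ((P {ω | Y ω ≤ ν - t}).toReal - (Q {ω | Z ω ≤ ν - t}).toReal)|
          ≤ ∫ t in Set.Ioi (0:ℝ), (Set.Icc (ν - U) ν).indicator (fun _ => ε) t := by
            refine norm_integral_le_of_norm_le ?_
              (ae_restrict_of_forall_mem measurableSet_Ioi hbound)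
            exact (integrable_indicator_iff measurableSet_Icc).2
              (integrableOn_const measure_Icc_lt_top.ne)
        _ ≤ U * ε := by
            rw [integral_indicator measurableSet_Icc, setIntegral_const, smul_eq_mul]
            have hle : ((volume.restrict (Set.Ioi 0)) (Set.Icc (ν - U) ν)).toReal ≤ U := by
              have h' : (volume.restrict (Set.Ioi 0)) (Set.Icc (ν - U) ν)
                  ≤ ENNReal.ofReal U := by
                rw [Measure.restrict_apply measurableSet_Icc]
                calc volume (Set.Icc (ν - U) ν ∩ Set.Ioi 0)
                    ≤ volume (Set.Icc (ν - U) ν) := measure_mono Set.inter_subset_left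
                  _ = ENNReal.ofReal U := by rw [Real.volume_Icc]; ring_nf
              calc ((volume.restrict (Set.Ioi 0)) (Set.Icc (ν - U) ν)).toReal
                  ≤ (ENNReal.ofReal U).toReal :=
                    ENNReal.toReal_mono ENNReal.ofReal_ne_top h'
                _ = U := ENNReal.toReal_ofReal hU.le
            exact mul_le_mul_of_nonneg_right hle hε
    have heq : f ν - g ν
        = (1 / α) * ((∫ ω, max (ν - Z ω) 0 ∂Q) - ∫ ω, max (ν - Y ω) 0 ∂P) := by
      simp only [hf, hg]; ring
    rw [heq, abs_mul, abs_of_nonneg (by positivity : (0:ℝ) ≤ 1 / α), abs_sub_comm]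
    calc (1 / α) * |(∫ ω, max (ν - Y ω) 0 ∂P) - ∫ ω, max (ν - Z ω) 0 ∂Q|
        ≤ (1 / α) * (U * ε) := mul_le_mul_of_nonneg_left hint (by positivity)
      _ = U * ε / α := by ring
  have hbddP : BddAbove (Set.range f) :=
    ⟨U, by rintro x ⟨ν, rfl⟩; exact aux_bdd P hαinv hα0 hU hY hYr ν⟩
  have hbddQ : BddAbove (Set.range g) :=
    ⟨U, by rintro x ⟨ν, rfl⟩; exact aux_bdd Q hαinv hα0 hU hZ hZr ν⟩
  have hcP : cvar P α Y = ⨆ ν, f ν := rfl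
  have hcQ : cvar Q α Z = ⨆ ν, g ν := rfl
  have h1 : cvar P α Y ≤ cvar Q α Z + U * ε / α := by
    rw [hcP, hcQ]
    refine ciSup_le fun ν => ?_
    have h := abs_le.1 (key ν)
    calc f ν ≤ g ν + U * ε / α := by linarith [h.2]
      _ ≤ (⨆ ν, g ν) + U * ε / α := add_le_add_left (le_ciSup hbddQ ν) _
  have h2 : cvar Q α Z ≤ cvar P α Y + U * ε / α := by
    rw [hcP, hcQ]
    refine ciSup_le fun ν => ?_
    have h := abs_le.1 (key ν)
    calc g ν ≤ f ν + U * ε / α := by linarith [h.1]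
      _ ≤ (⨆ ν, f ν) + U * ε / α := add_le_add_left (le_ciSup hbddP ν) _
  rw [abs_le]
  constructor <;> linarith
end
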